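/- Let M_A, M_B ∈ SU(1,1) be reflection matrices (Tr M_A = Tr M_B = 0) that do not commute. Then their product M_C = M_A·M_B is hyperbolic, i.e. |Tr(M_A·M_B)| > 2. -/

import Mathlib

open Complex Matrix

set_option maxHeartbeats 1600000

lemma key_identity (A C B1 B2 D1 D2 : ℝ)
    (h1 : A ^ 2 = 1 + B1 ^ 2 + B2 ^ 2) (h2 : C ^ 2 = 1 + D1 ^ 2 + D2 ^ 2) :
    A ^ 2 * ((A * C - (B1 * D1 + B2 * D2)) ^ 2 - 1) =
      (A * D1 - C * B1) ^ 2 + (A * D2 - C * B2) ^ 2 +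
        (B1 * (A * D1 - C * B1) + B2 * (A * D2 - C * B2)) ^ 2 := by
  linear_combination
    ((-1) + (-1)*D2^2 + (-1)*D1^2 + C^2 + C^2*B2^2 + C^2*B1^2
      + (-2)*A*C*B2*D2 + (-2)*A*C*B1*D1 + A^2*C^2) * h1
    + (1 + B2^2 + B1^2) * h2

/-- The product of two non-commuting traceless (reflection) `SU(1,1)` matrices
is hyperbolic: `|Tr(M_A · M_B)| > 2`. -/
theorem reflections_product_hyperbolic (a b c d : ℂ)
    (hA : ‖a‖ ^ 2 - ‖b‖ ^ 2 = 1)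
    (hB : ‖c‖ ^ 2 - ‖d‖ ^ 2 = 1)
    (MA MB : Matrix (Fin 2) (Fin 2) ℂ)
    (hMA : MA = !![a, b; (starRingEnd ℂ) b, (starRingEnd ℂ) a])
    (hMB : MB = !![c, d; (starRingEnd ℂ) d, (starRingEnd ℂ) c])
    (htA : MA.trace = 0) (htB : MB.trace = 0)
    (hcom : MA * MB ≠ MB * MA) :
    ‖(MA * MB).trace‖ > 2 := by
  subst hMA hMB
  -- real parts of a, c vanish
  have ha : a.re = 0 := by
    have := htA
    simp [Matrix.trace, Fin.sum_univ_two, Complex.ext_iff] at this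
    exact this
  have hc : c.re = 0 := by
    have := htB
    simp [Matrix.trace, Fin.sum_univ_two, Complex.ext_iff] at this
    exact this
  set A := a.im with hAdef
  set C := c.im with hCdef
  set B1 := b.re; set B2 := b.im; set D1 := d.re; set D2 := d.im
  have h1 : A ^ 2 = 1 + B1 ^ 2 + B2 ^ 2 := by
    have := hA
    rw [Complex.sq_norm, Complex.sq_norm, Complex.normSq_apply, Complex.normSq_apply] at this
    nlinarith [this, ha]
  have h2 : C ^ 2 = 1 + D1 ^ 2 + D2 ^ 2 := by
    have := hB
    rw [Complex.sq_norm, Complex.sq_norm, Complex.normSq_apply, Complex.normSq_apply] at this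
    nlinarith [this, hc]
  -- the trace of the product is real
  have htr : (!![a, b; (starRingEnd ℂ) b, (starRingEnd ℂ) a] *
      !![c, d; (starRingEnd ℂ) d, (starRingEnd ℂ) c]).trace
      = ((2 * (B1 * D1 + B2 * D2) - 2 * (A * C) : ℝ) : ℂ) := by
    simp [Matrix.trace, Fin.sum_univ_two, Matrix.mul_apply, Complex.ext_iff,
      Complex.add_re, Complex.add_im, Complex.mul_re, Complex.mul_im, ha, hc]
    constructor <;> ring
  rw [htr, Complex.norm_real, Real.norm_eq_abs]
  by_contra hle
  push_neg at hle
  -- hence (A*C - R)^2 ≤ 1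
  have hE : (A * C - (B1 * D1 + B2 * D2)) ^ 2 ≤ 1 := by
    have := abs_le.mp hle
    nlinarith [this.1, this.2]
  have hApos : 0 < A ^ 2 := by nlinarith [sq_nonneg B1, sq_nonneg B2]
  set X := A * D1 - C * B1 with hX
  set Y := A * D2 - C * B2 with hY
  have hkey := key_identity A C B1 B2 D1 D2 h1 h2
  have hXY : X ^ 2 + Y ^ 2 + (B1 * X + B2 * Y) ^ 2 ≤ 0 := by
    rw [← hkey]
    nlinarith [hE, hApos]
  have hX0 : X = 0 := by nlinarith [sq_nonneg X, sq_nonneg Y, sq_nonneg (B1*X+B2*Y)]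
  have hY0 : Y = 0 := by nlinarith [sq_nonneg X, sq_nonneg Y, sq_nonneg (B1*X+B2*Y)]
  -- S = 0 as well
  have hS : B2 * D1 - B1 * D2 = 0 := by
    have hAne : A ≠ 0 := by
      intro h; rw [h] at hApos; simp at hApos
    have : A * (B2 * D1 - B1 * D2) = B2 * X - B1 * Y := by rw [hX, hY]; ring
    have h0 : A * (B2 * D1 - B1 * D2) = 0 := by rw [this, hX0, hY0]; ring
    exact (mul_eq_zero.mp h0).resolve_left hAne
  -- hence the matrices commute: contradiction
  apply hcom
  have hXc : A * d.re - C * b.re = 0 := hX0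
  have hYc : A * d.im - C * b.im = 0 := hY0
  ext i j
  fin_cases i <;> fin_cases j <;>
    simp [Matrix.mul_apply, Fin.sum_univ_two, Complex.ext_iff,
      Complex.add_re, Complex.add_im, Complex.mul_re, Complex.mul_im, ha, hc] <;>
    constructor <;> linarith [hXc, hYc, hS]
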